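/- arXiv:2501.00503 — 3 statements merged into one kernel-verified Lean document; each statement's English description precedes it below -/
import Mathlib

section
/- Let I be an ideal on ω containing all finite subsets of ω, let δ be the submeasure with δ(∅) = 0 and δ(A) = 1 for A ≠ ∅, and let δ_I be the submeasure with δ_I(A) = 0 for A ∈ I and δ_I(A) = 1 otherwise. Then δ + δ_I is a submeasure which is not lower semicontinuous, and (δ + δ_I)̂_σ = δ while (δ + δ_I)̂ = δ + δ_I. -/
open Filter
open scoped ENNReal

/-- A submeasure on a set (type) `X`. -/
def IsSubmeasure {X : Type*} (φ : Set X → ℝ≥0∞) : Prop :=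
  φ ∅ = 0 ∧ (∀ A B : Set X, A ⊆ B → φ A ≤ φ B) ∧ ∀ A B : Set X, φ (A ∪ B) ≤ φ A + φ B

/-- A (finitely additive) measure on `X`. -/
def IsFAMeasure {X : Type*} (μ : Set X → ℝ≥0∞) : Prop :=
  μ ∅ = 0 ∧ ∀ A B : Set X, Disjoint A B → μ (A ∪ B) = μ A + μ B

/-- A σ-measure on `X`: a measure that is countably additive on pairwise disjoint sequences. -/
def IsSigmaMeasure {X : Type*} (μ : Set X → ℝ≥0∞) : Prop :=
  IsFAMeasure μ ∧ ∀ A : ℕ → Set X, (Pairwise fun m n => Disjoint (A m) (A n)) →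
    μ (⋃ n, A n) = ∑' n, μ (A n)

/-- `hat φ A = sup { μ A : μ a measure with μ ≤ φ pointwise }`. -/
noncomputable def hat {X : Type*} (φ : Set X → ℝ≥0∞) (A : Set X) : ℝ≥0∞ :=
  ⨆ (μ : Set X → ℝ≥0∞) (_ : IsFAMeasure μ ∧ ∀ B, μ B ≤ φ B), μ A

/-- `hatSigma φ A = sup { μ A : μ a σ-measure with μ ≤ φ pointwise }`. -/
noncomputable def hatSigma {X : Type*} (φ : Set X → ℝ≥0∞) (A : Set X) : ℝ≥0∞ :=
  ⨆ (μ : Set X → ℝ≥0∞) (_ : IsSigmaMeasure μ ∧ ∀ B, μ B ≤ φ B), μ A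

/-- Lower semicontinuity of a submeasure. -/
def IsLSC {X : Type*} (φ : Set X → ℝ≥0∞) : Prop :=
  ∀ A : Set X, φ A = ⨆ (F : Set X) (_ : F ⊆ A ∧ F.Finite), φ F

/-- The ratio used in the degree of pathology, with the conventions
`∞/∞ = 0/0 = 1`, `a/0 = ∞` and `∞/a = ∞` for positive real `a`. -/
noncomputable def pratio (a b : ℝ≥0∞) : ℝ≥0∞ :=
  if (a = 0 ∧ b = 0) ∨ (a = ⊤ ∧ b = ⊤) then 1 else a / b

/-- The degree of pathology. -/
noncomputable def degP {X : Type*} (φ : Set X → ℝ≥0∞) : ℝ≥0∞ :=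
  ⨆ A : Set X, pratio (φ A) (hat φ A)

/-- The σ-degree of pathology. -/
noncomputable def degPSigma {X : Type*} (φ : Set X → ℝ≥0∞) : ℝ≥0∞ :=
  ⨆ A : Set X, pratio (φ A) (hatSigma φ A)

/-- The Fin-degree of pathology. -/
noncomputable def degPFin {X : Type*} (φ : Set X → ℝ≥0∞) : ℝ≥0∞ :=
  ⨆ (A : Set X) (_ : A.Finite), pratio (φ A) (hat φ A)

/-- An ideal on `ℕ`. -/
def IsIdeal (I : Set (Set ℕ)) : Prop :=
  ∅ ∈ I ∧ Set.univ ∉ I ∧ (∀ A B : Set ℕ, A ⊆ B → B ∈ I → A ∈ I) ∧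
    ∀ A B : Set ℕ, A ∈ I → B ∈ I → A ∪ B ∈ I

open Classical in
/-- The submeasure `δ`: `δ(∅) = 0` and `δ(A) = 1` for nonempty `A`. -/
noncomputable def delta : Set ℕ → ℝ≥0∞ :=
  fun A => if A = ∅ then 0 else 1

open Classical in
/-- The submeasure `δ_I` associated to an ideal `I`. -/
noncomputable def deltaI (I : Set (Set ℕ)) : Set ℕ → ℝ≥0∞ :=
  fun A => if A ∈ I then 0 else 1


section Aux

open Classical in
noncomputable def diracM (a : ℕ) : Set ℕ → ℝ≥0∞ := fun B => if a ∈ B then 1 else 0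

lemma diracM_sigma (a : ℕ) : IsSigmaMeasure (diracM a) := by
  constructor
  · refine ⟨by simp [diracM], fun A B hd => ?_⟩
    by_cases hA : a ∈ A
    · have hB : a ∉ B := fun hB => (Set.disjoint_left.mp hd hA) hB
      simp [diracM, hA, hB]
    · by_cases hB : a ∈ B <;> simp [diracM, hA, hB]
  · intro A hA
    by_cases h : a ∈ ⋃ n, A n
    · obtain ⟨k, hk⟩ := Set.mem_iUnion.mp h
      rw [show (∑' n, diracM a (A n)) = diracM a (A k) from
        tsum_eq_single k fun n hn => by
          have : a ∉ A n := fun h' => Set.disjoint_left.mp (hA hn) h' hk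
          simp [diracM, this]]
      simp [diracM, h, hk]
    · have : ∀ n, a ∉ A n := fun n hn => h (Set.mem_iUnion.mpr ⟨n, hn⟩)
      simp [diracM, h, this]

open Classical in
noncomputable def ufM (U : Ultrafilter ℕ) : Set ℕ → ℝ≥0∞ := fun B => if B ∈ U then 1 else 0

lemma ufM_fa (U : Ultrafilter ℕ) : IsFAMeasure (ufM U) := by
  refine ⟨by simp [ufM, U.empty_notMem], fun A B hd => ?_⟩
  by_cases hA : A ∈ U
  · have hB : B ∉ U := fun hB => by
      have := Filter.inter_mem hA hB
      rw [Set.disjoint_iff_inter_eq_empty.mp hd] at this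
      exact U.empty_notMem this
    simp [ufM, hA, hB, Filter.mem_of_superset hA Set.subset_union_left]
  · by_cases hB : B ∈ U
    · simp [ufM, hA, hB, Filter.mem_of_superset hB Set.subset_union_right]
    · have : A ∪ B ∉ U := fun h => (Ultrafilter.union_mem_iff.mp h).elim hA hB
      simp [ufM, hA, hB, this]

lemma delta_le_one (A : Set ℕ) : delta A ≤ 1 := by
  unfold delta; split <;> simp

lemma diracM_le_delta (a : ℕ) (B : Set ℕ) : diracM a B ≤ delta B := by
  unfold diracM delta
  split
  · next h => rw [if_neg (Set.nonempty_iff_ne_empty.mp ⟨a, h⟩)]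
  · simp

lemma fa_finset (μ : Set ℕ → ℝ≥0∞) (hμ : IsFAMeasure μ) (A : Set ℕ) (s : Finset ℕ) :
    μ (A ∩ ↑s) = ∑ n ∈ s, μ (A ∩ {n}) := by
  induction s using Finset.induction_on with
  | empty => simp [hμ.1]
  | insert k s hk ih =>
    have hset : A ∩ ↑(insert k s) = (A ∩ {k}) ∪ (A ∩ ↑s) := by
      rw [Finset.coe_insert, Set.insert_eq, Set.inter_union_distrib_left]
    have hdisj : Disjoint (A ∩ {k}) (A ∩ ↑s) := by
      rw [Set.disjoint_left]
      rintro x ⟨-, rfl⟩ ⟨-, hx2⟩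
      exact hk hx2
    rw [hset, hμ.2 _ _ hdisj, ih, Finset.sum_insert hk]

lemma sigma_mu_le (I : Set (Set ℕ)) (hfin : ∀ A : Set ℕ, A.Finite → A ∈ I)
    (μ : Set ℕ → ℝ≥0∞) (hμ : IsSigmaMeasure μ)
    (hle : ∀ B, μ B ≤ delta B + deltaI I B) (A : Set ℕ) : μ A ≤ delta A := by
  rcases eq_or_ne A ∅ with rfl | hne
  · simp [delta, hμ.1.1]
  · rw [show delta A = 1 from if_neg hne]
    have hcover : A = ⋃ n, A ∩ {n} := by ext x; simp
    have hdisj : Pairwise fun m n => Disjoint (A ∩ {m}) (A ∩ {n}) := by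
      intro m n hmn
      rw [Set.disjoint_left]
      rintro x ⟨-, rfl⟩ ⟨-, hx2⟩
      exact hmn (Set.mem_singleton_iff.mp hx2)
    calc μ A = μ (⋃ n, A ∩ {n}) := by rw [← hcover]
      _ = ∑' n, μ (A ∩ {n}) := hμ.2 _ hdisj
      _ = ⨆ s : Finset ℕ, ∑ n ∈ s, μ (A ∩ {n}) := ENNReal.tsum_eq_iSup_sum
      _ ≤ 1 := by
        refine iSup_le fun s => ?_
        rw [← fa_finset μ hμ.1 A s]
        have hmem : A ∩ ↑s ∈ I := hfin _ (Set.Finite.inter_of_right s.finite_toSet A)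
        calc μ (A ∩ ↑s) ≤ delta (A ∩ ↑s) + deltaI I (A ∩ ↑s) := hle _
          _ ≤ 1 + 0 := add_le_add (delta_le_one _) (le_of_eq (if_pos hmem))
          _ = 1 := add_zero 1

lemma exists_uf (I : Set (Set ℕ)) (hI : IsIdeal I) (A : Set ℕ) (hA : A ∉ I) :
    ∃ U : Ultrafilter ℕ, A ∈ U ∧ ∀ S ∈ I, S ∉ U := by
  obtain ⟨hI0, _, hdown, hunion⟩ := hI
  let F : Filter ℕ :=
    { sets := {B | A \ B ∈ I}
      univ_sets := by simpa using hdown _ _ (by simp) hI0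
      sets_of_superset := fun h hsub => hdown _ _ (Set.diff_subset_diff_right hsub) h
      inter_sets := fun h1 h2 => by
        simpa [Set.diff_inter] using hunion _ _ h1 h2 }
  have hFmem : ∀ B, B ∈ F ↔ A \ B ∈ I := fun B => Iff.rfl
  have hne : F.NeBot := by
    refine Filter.neBot_iff.mpr fun hbot => hA ?_
    have : ∅ ∈ F := hbot ▸ Filter.mem_bot
    simpa using (hFmem ∅).mp this
  refine ⟨Ultrafilter.of F, Ultrafilter.of_le F ((hFmem A).mpr (by simpa using hI0)), ?_⟩
  intro S hS hSU
  have hc : Sᶜ ∈ Ultrafilter.of F :=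
    Ultrafilter.of_le F ((hFmem Sᶜ).mpr (hdown _ _ (fun x hx => Set.not_notMem.mp hx.2) hS))
  exact (Ultrafilter.compl_mem_iff_notMem.mp hc) hSU


lemma deltaI_le_one (I : Set (Set ℕ)) (A : Set ℕ) : deltaI I A ≤ 1 := by
  unfold deltaI; split <;> simp

end Aux

/-- For an ideal `I` on `ℕ` containing all finite sets, `δ + δ_I` is a non-lsc submeasure with
`(δ + δ_I)̂_σ = δ` and `(δ + δ_I)̂ = δ + δ_I`. -/
theorem stmt5 (I : Set (Set ℕ)) (hI : IsIdeal I) (hfin : ∀ A : Set ℕ, A.Finite → A ∈ I) :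
    IsSubmeasure (fun A => delta A + deltaI I A) ∧
    ¬ IsLSC (fun A => delta A + deltaI I A) ∧
    (∀ A, hatSigma (fun A => delta A + deltaI I A) A = delta A) ∧
    (∀ A, hat (fun A => delta A + deltaI I A) A = delta A + deltaI I A) := by
  have hI0 := hI.1
  have hIuniv := hI.2.1
  have hdown := hI.2.2.1
  have hunion := hI.2.2.2
  refine ⟨⟨by simp [delta, deltaI, hI0], ?_, ?_⟩, ?_, ?_, ?_⟩
  · -- monotone
    intro A B hAB
    refine add_le_add ?_ ?_
    · rcases eq_or_ne A ∅ with rfl | hA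
      · simp [delta]
      · rcases eq_or_ne B ∅ with rfl | hB
        · exact absurd (Set.subset_empty_iff.mp hAB) hA
        · rw [show delta A = 1 from if_neg hA, show delta B = 1 from if_neg hB]
    · by_cases hB : B ∈ I
      · simp [deltaI, hdown A B hAB hB, hB]
      · exact le_trans (deltaI_le_one I A) (le_of_eq (if_neg hB).symm)
  · -- subadditive
    intro A B
    have h1 : delta (A ∪ B) ≤ delta A + delta B := by
      rcases eq_or_ne A ∅ with rfl | hA
      · rw [show (∅:Set ℕ) ∪ B = B from Set.empty_union B]; simp [delta]
      · calc delta (A ∪ B) ≤ 1 := delta_le_one _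
          _ = delta A := (if_neg hA).symm
          _ ≤ delta A + delta B := le_self_add
    have h2 : deltaI I (A ∪ B) ≤ deltaI I A + deltaI I B := by
      by_cases hA : A ∈ I
      · by_cases hB : B ∈ I
        · simp [deltaI, hA, hB, hunion _ _ hA hB]
        · calc deltaI I (A ∪ B) ≤ 1 := deltaI_le_one I _
            _ = deltaI I B := (if_neg hB).symm
            _ ≤ deltaI I A + deltaI I B := le_add_self
      · calc deltaI I (A ∪ B) ≤ 1 := deltaI_le_one I _
          _ = deltaI I A := (if_neg hA).symm
          _ ≤ deltaI I A + deltaI I B := le_self_add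
    calc delta (A ∪ B) + deltaI I (A ∪ B) ≤ (delta A + delta B) + (deltaI I A + deltaI I B) :=
          add_le_add h1 h2
      _ = (delta A + deltaI I A) + (delta B + deltaI I B) := add_add_add_comm _ _ _ _
  · -- not LSC
    intro hlsc
    have h := hlsc Set.univ
    have huniv : delta Set.univ + deltaI I Set.univ = 2 := by
      rw [show delta Set.univ = 1 from
        if_neg (Set.nonempty_iff_ne_empty.mp Set.univ_nonempty),
        show deltaI I Set.univ = 1 from if_neg hIuniv]
      norm_num
    have hle1 : (⨆ (F : Set ℕ) (_ : F ⊆ Set.univ ∧ F.Finite), delta F + deltaI I F) ≤ 1 := by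
      refine iSup₂_le fun F hF => ?_
      rw [show deltaI I F = 0 from if_pos (hfin F hF.2), add_zero]
      exact delta_le_one F
    have h2 : (2 : ℝ≥0∞) ≤ 1 := by
      rw [← huniv]
      exact le_of_eq_of_le h hle1
    exact absurd h2 (by norm_num)
  · -- hatSigma = delta
    intro A
    refine le_antisymm (iSup₂_le fun μ hμ => sigma_mu_le I hfin μ hμ.1 hμ.2 A) ?_
    rcases eq_or_ne A ∅ with rfl | hA
    · simp [delta]
    · obtain ⟨a, ha⟩ := Set.nonempty_iff_ne_empty.mpr hA
      have hcond : IsSigmaMeasure (diracM a) ∧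
          ∀ B, diracM a B ≤ delta B + deltaI I B :=
        ⟨diracM_sigma a, fun B => le_trans (diracM_le_delta a B) le_self_add⟩
      calc delta A = diracM a A := by rw [show delta A = 1 from if_neg hA]; simp [diracM, ha]
        _ ≤ _ := le_iSup₂_of_le (diracM a) hcond le_rfl
  · -- hat = phi
    intro A
    refine le_antisymm (iSup₂_le fun μ hμ => hμ.2 A) ?_
    rcases eq_or_ne A ∅ with rfl | hA
    · simp [delta, deltaI, hI0]
    · obtain ⟨a, ha⟩ := Set.nonempty_iff_ne_empty.mpr hA
      by_cases hAI : A ∈ I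
      · have hcond : IsFAMeasure (diracM a) ∧
            ∀ B, diracM a B ≤ delta B + deltaI I B :=
          ⟨(diracM_sigma a).1, fun B => le_trans (diracM_le_delta a B) le_self_add⟩
        calc delta A + deltaI I A = diracM a A := by
              rw [show deltaI I A = 0 from if_pos hAI, add_zero, show delta A = 1 from if_neg hA]; simp [diracM, ha]
          _ ≤ _ := le_iSup₂_of_le (diracM a) hcond le_rfl
      · obtain ⟨U, hAU, hU⟩ := exists_uf I hI A hAI
        have hFA : IsFAMeasure (fun B => diracM a B + ufM U B) := by
          refine ⟨by simp [(diracM_sigma a).1.1, (ufM_fa U).1], fun B C hd => ?_⟩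
          simp only [(diracM_sigma a).1.2 B C hd, (ufM_fa U).2 B C hd]
          exact add_add_add_comm _ _ _ _
        have hle : ∀ B, diracM a B + ufM U B ≤ delta B + deltaI I B := by
          intro B
          refine add_le_add (diracM_le_delta a B) ?_
          by_cases hB : B ∈ I
          · simp [ufM, hU B hB, hB, deltaI]
          · rw [show deltaI I B = 1 from if_neg hB]
            unfold ufM; split <;> simp
        have hval : diracM a A + ufM U A = delta A + deltaI I A := by
          simp [diracM, ufM, ha, hAU, delta, deltaI, hA, hAI]
        calc delta A + deltaI I A = diracM a A + ufM U A := hval.symm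
          _ ≤ _ := le_iSup₂_of_le (fun B => diracM a B + ufM U B) ⟨hFA, hle⟩ le_rfl
end

section
/- Let f : ω → [0,∞) satisfy f(0) ≠ 0, ∑_{i∈ω} f(i) = ∞, and lim_{n→∞} f(n)/∑_{i<n} f(i) = 0. For n ≥ 1 let φ_{f,n}(A) = (∑_{i∈A∩[0,n)} f(i))/(∑_{i<n} f(i)), and define φ_f(A) = sup{φ_{f,n}(A) : n ≥ 1} and φ̄_f(A) = limsup_{n→∞} φ_{f,n}(A). Then φ_f is a σ-nonpathological lower semicontinuous submeasure, and φ̄_f is a nonpathological submeasure which is not lower semicontinuous. -/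
open Filter
open scoped ENNReal

/-- The normalized partial-sum measure `φ_{f,n}`. -/
noncomputable def phiFN (f : ℕ → ℝ) (n : ℕ) (A : Set ℕ) : ℝ≥0∞ :=
  ENNReal.ofReal ((∑ i ∈ Finset.range n, A.indicator f i) / ∑ i ∈ Finset.range n, f i)

/-- `φ_f A = sup { φ_{f,n} A : n ≥ 1 }`. -/
noncomputable def phiF (f : ℕ → ℝ) (A : Set ℕ) : ℝ≥0∞ :=
  ⨆ (n : ℕ) (_ : 1 ≤ n), phiFN f n A

/-- `φ̄_f A = limsup_{n → ∞} φ_{f,n} A`. -/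
noncomputable def phiBarF (f : ℕ → ℝ) (A : Set ℕ) : ℝ≥0∞ :=
  Filter.limsup (fun n => phiFN f n A) Filter.atTop


section Helpers

open Filter Topology

variable {f : ℕ → ℝ}

lemma S_nonneg (hpos : ∀ n, 0 ≤ f n) (n : ℕ) : 0 ≤ ∑ i ∈ Finset.range n, f i :=
  Finset.sum_nonneg fun i _ => hpos i

lemma ind_nonneg (hpos : ∀ n, 0 ≤ f n) (A : Set ℕ) (i : ℕ) : 0 ≤ A.indicator f i :=
  Set.indicator_nonneg (fun j _ => hpos j) i

lemma phiFN_empty (f : ℕ → ℝ) (n : ℕ) : phiFN f n ∅ = 0 := by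
  simp [phiFN]

lemma phiFN_mono (hpos : ∀ n, 0 ≤ f n) {A B : Set ℕ} (h : A ⊆ B) (n : ℕ) :
    phiFN f n A ≤ phiFN f n B := by
  apply ENNReal.ofReal_le_ofReal
  rw [div_eq_mul_inv, div_eq_mul_inv]
  refine mul_le_mul_of_nonneg_right ?_ (inv_nonneg.2 (S_nonneg hpos n))
  exact Finset.sum_le_sum fun i _ => Set.indicator_le_indicator_of_subset h (fun j => hpos j) i

lemma phiFN_union (hpos : ∀ n, 0 ≤ f n) (A B : Set ℕ) (hd : Disjoint A B) (n : ℕ) :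
    phiFN f n (A ∪ B) = phiFN f n A + phiFN f n B := by
  unfold phiFN
  rw [← ENNReal.ofReal_add (div_nonneg (Finset.sum_nonneg fun i _ => ind_nonneg hpos A i)
      (S_nonneg hpos n)) (div_nonneg (Finset.sum_nonneg fun i _ => ind_nonneg hpos B i)
      (S_nonneg hpos n)), ← add_div]
  congr 2
  rw [← Finset.sum_add_distrib]
  exact Finset.sum_congr rfl fun i _ => by rw [Set.indicator_union_of_disjoint hd]

lemma phiFN_subadd (hpos : ∀ n, 0 ≤ f n) (A B : Set ℕ) (n : ℕ) :
    phiFN f n (A ∪ B) ≤ phiFN f n A + phiFN f n B := by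
  have h1 : A ∪ B = A ∪ (B \ A) := by rw [Set.union_diff_self]
  rw [h1, phiFN_union hpos A (B \ A) disjoint_sdiff_self_right n]
  exact add_le_add le_rfl (phiFN_mono hpos Set.diff_subset n)

lemma phiFN_sigma' (hpos : ∀ n, 0 ≤ f n) (n : ℕ) : IsSigmaMeasure (phiFN f n) := by
  refine ⟨⟨phiFN_empty f n, fun A B hd => phiFN_union hpos A B hd n⟩, fun A hA => ?_⟩
  set S := ∑ i ∈ Finset.range n, f i with hS
  have key : ∀ B : Set ℕ, phiFN f n B =
      ∑ i ∈ Finset.range n, B.indicator (fun j => ENNReal.ofReal (f j / S)) i := by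
    intro B
    rw [phiFN, Finset.sum_div, ENNReal.ofReal_sum_of_nonneg
      (fun i _ => div_nonneg (ind_nonneg hpos B i) (S_nonneg hpos n))]
    refine Finset.sum_congr rfl fun i _ => ?_
    by_cases hi : i ∈ B <;> simp [hi, hS]
  rw [key]
  calc ∑ i ∈ Finset.range n, (⋃ k, A k).indicator (fun j => ENNReal.ofReal (f j / S)) i
      = ∑ i ∈ Finset.range n, ∑' k, (A k).indicator (fun j => ENNReal.ofReal (f j / S)) i := by
        refine Finset.sum_congr rfl fun i _ => ?_
        by_cases hi : i ∈ ⋃ k, A k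
        · obtain ⟨k₀, hk₀⟩ := Set.mem_iUnion.1 hi
          rw [tsum_eq_single k₀]
          · simp [Set.indicator_of_mem hi, Set.indicator_of_mem hk₀]
          · intro k hk
            have : i ∉ A k := fun hik => (hA hk).le_bot ⟨hik, hk₀⟩
            simp [Set.indicator_of_notMem this]
        · have h2 : ∀ k, i ∉ A k := fun k hik => hi (Set.mem_iUnion.2 ⟨k, hik⟩)
          simp [Set.indicator_of_notMem hi, Set.indicator_of_notMem (h2 _)]
    _ = ∑' k, ∑ i ∈ Finset.range n, (A k).indicator (fun j => ENNReal.ofReal (f j / S)) i :=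
        (Summable.tsum_finsetSum fun i _ => ENNReal.summable).symm
    _ = ∑' k, phiFN f n (A k) := tsum_congr fun k => (key (A k)).symm

lemma phiF_submeasure (hpos : ∀ n, 0 ≤ f n) : IsSubmeasure (phiF f) := by
  refine ⟨by simp [phiF, phiFN_empty], fun A B h => ?_, fun A B => ?_⟩
  · exact iSup₂_mono fun n _ => phiFN_mono hpos h n
  · refine iSup₂_le fun n hn => ?_
    exact (phiFN_subadd hpos A B n).trans
      (add_le_add (le_iSup₂ (f := fun n (_ : 1 ≤ n) => phiFN f n A) n hn)
        (le_iSup₂ (f := fun n (_ : 1 ≤ n) => phiFN f n B) n hn))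

lemma phiFN_inter_range (f : ℕ → ℝ) (A : Set ℕ) (n : ℕ) :
    phiFN f n A = phiFN f n (A ∩ {i | i < n}) := by
  unfold phiFN
  congr 2
  refine Finset.sum_congr rfl fun i hi => ?_
  have hi' : i < n := Finset.mem_range.1 hi
  by_cases h : i ∈ A
  · rw [Set.indicator_of_mem h, Set.indicator_of_mem (show i ∈ A ∩ {j | j < n} from ⟨h, hi'⟩)]
  · rw [Set.indicator_of_notMem h, Set.indicator_of_notMem (fun hc => h hc.1)]

lemma phiF_lsc (hpos : ∀ n, 0 ≤ f n) : IsLSC (phiF f) := by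
  intro A
  refine le_antisymm ?_ (iSup₂_le fun F hF => iSup₂_mono fun n _ => phiFN_mono hpos hF.1 n)
  refine iSup₂_le fun n hn => ?_
  rw [phiFN_inter_range]
  refine le_trans ?_ (le_iSup₂ (f := fun (F : Set ℕ) (_ : F ⊆ A ∧ F.Finite) => phiF f F)
    (A ∩ {i | i < n}) ⟨Set.inter_subset_left, Set.Finite.inter_of_right (Set.finite_lt_nat n) A⟩)
  exact le_iSup₂ (f := fun m (_ : 1 ≤ m) => phiFN f m (A ∩ {i | i < n})) n hn

lemma phiF_sigmanonpath (hpos : ∀ n, 0 ≤ f n) (A : Set ℕ) : hatSigma (phiF f) A = phiF f A := by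
  refine le_antisymm (iSup₂_le fun μ hμ => hμ.2 A) (iSup₂_le fun n hn => ?_)
  refine le_iSup₂_of_le (phiFN f n) ⟨phiFN_sigma' hpos n, fun B =>
    le_iSup₂ (f := fun m (_ : 1 ≤ m) => phiFN f m B) n hn⟩ le_rfl

lemma limsup_add_le' (u v : ℕ → ℝ≥0∞) :
    limsup (fun n => u n + v n) atTop ≤ limsup u atTop + limsup v atTop := by
  set a := limsup u atTop
  set b := limsup v atTop
  rcases eq_top_or_lt_top a with ha | ha
  · simp [ha, top_add]
  rcases eq_top_or_lt_top b with hb | hb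
  · simp [hb, add_top]
  refine ENNReal.le_of_forall_pos_le_add fun ε hε _ => ?_
  have hε2 : (0:ℝ≥0∞) < ε / 2 := by
    exact ENNReal.div_pos (by exact_mod_cast hε.ne') (by norm_num)
  have hu : ∀ᶠ n in atTop, u n < a + ε / 2 :=
    Filter.eventually_lt_of_limsup_lt (by exact ENNReal.lt_add_right ha.ne hε2.ne')
  have hv : ∀ᶠ n in atTop, v n < b + ε / 2 :=
    Filter.eventually_lt_of_limsup_lt (by exact ENNReal.lt_add_right hb.ne hε2.ne')
  have : ∀ᶠ n in atTop, u n + v n ≤ a + b + ε := by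
    filter_upwards [hu, hv] with n h1 h2
    calc u n + v n ≤ (a + ε/2) + (b + ε/2) := add_le_add h1.le h2.le
    _ = a + b + (ε/2 + ε/2) := by ring
    _ = a + b + ε := by rw [ENNReal.add_halves]
  exact limsup_le_of_le (by isBoundedDefault) this

lemma phiBar_submeasure (hpos : ∀ n, 0 ≤ f n) : IsSubmeasure (phiBarF f) := by
  refine ⟨?_, fun A B h => ?_, fun A B => ?_⟩
  · simp only [phiBarF, phiFN_empty]
    exact limsup_const 0
  · exact limsup_le_limsup (Eventually.of_forall fun n => phiFN_mono hpos h n)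
  · refine le_trans (limsup_le_limsup (Eventually.of_forall fun n => phiFN_subadd hpos A B n)) ?_
    exact limsup_add_le' _ _

lemma phiBar_nonpath (hpos : ∀ n, 0 ≤ f n) (A : Set ℕ) :
    hat (phiBarF f) A = phiBarF f A := by
  refine le_antisymm (iSup₂_le fun μ hμ => hμ.2 A) ?_
  refine le_of_forall_lt_imp_le_of_dense fun c hc => ?_
  have hfreq : ∃ᶠ n in atTop, c < phiFN f n A := frequently_lt_of_lt_limsup (by isBoundedDefault) hc
  have hne : NeBot (atTop ⊓ 𝓟 {n | c < phiFN f n A}) := frequently_iff_neBot.1 hfreq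
  obtain ⟨U, hU⟩ := Filter.exists_ultrafilter_le (atTop ⊓ 𝓟 {n | c < phiFN f n A})
  have hUat : (U : Filter ℕ) ≤ atTop := hU.trans inf_le_left
  set μ : Set ℕ → ℝ≥0∞ := fun B => (U.map (fun n => phiFN f n B)).lim with hμdef
  have ht : ∀ B, Tendsto (fun n => phiFN f n B) U (𝓝 (μ B)) := fun B =>
    (U.map (fun n => phiFN f n B)).le_nhds_lim
  have hle : ∀ B, μ B ≤ phiBarF f B := by
    intro B
    rw [← (ht B).limsup_eq]
    exact limsup_le_limsup_of_le hUat
  refine le_iSup₂_of_le μ ⟨⟨?_, ?_⟩, hle⟩ ?_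
  · have : Tendsto (fun n => phiFN f n (∅ : Set ℕ)) U (𝓝 0) := by
      simp only [phiFN_empty]; exact tendsto_const_nhds
    exact tendsto_nhds_unique (ht ∅) this
  · intro B C hd
    have : Tendsto (fun n => phiFN f n (B ∪ C)) U (𝓝 (μ B + μ C)) := by
      have := (ht B).add (ht C)
      refine this.congr fun n => (phiFN_union hpos B C hd n).symm
    exact tendsto_nhds_unique (ht (B ∪ C)) this
  · have hmem : {n | c < phiFN f n A} ∈ U := hU (mem_inf_of_right (mem_principal_self _))
    refine ge_of_tendsto (ht A) ?_
    filter_upwards [hmem] with n hn using hn.le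

lemma phiBar_univ (hpos : ∀ n, 0 ≤ f n) (h0 : f 0 ≠ 0) :
    phiBarF f Set.univ = 1 := by
  have hev : (fun n => phiFN f n (Set.univ : Set ℕ)) =ᶠ[atTop] fun _ => (1 : ℝ≥0∞) := by
    filter_upwards [eventually_ge_atTop 1] with n hn
    have hS : 0 < ∑ i ∈ Finset.range n, f i := by
      have h1 : f 0 ≤ ∑ i ∈ Finset.range n, f i :=
        Finset.single_le_sum (fun i _ => hpos i) (Finset.mem_range.2 hn)
      exact lt_of_lt_of_le (lt_of_le_of_ne (hpos 0) (Ne.symm h0)) h1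
    simp only [phiFN, Set.indicator_univ]
    rw [div_self hS.ne']
    simp
  rw [phiBarF, limsup_congr hev, limsup_const]

lemma phiBar_finite (hpos : ∀ n, 0 ≤ f n) (hdiv : ¬ Summable f) {F : Set ℕ} (hF : F.Finite) :
    phiBarF f F = 0 := by
  have hS : Tendsto (fun n => ∑ i ∈ Finset.range n, f i) atTop atTop :=
    (not_summable_iff_tendsto_nat_atTop_of_nonneg hpos).1 hdiv
  set C : ℝ := ∑ i ∈ hF.toFinset, f i with hC
  have hb : ∀ n, phiFN f n F ≤ ENNReal.ofReal (C / ∑ i ∈ Finset.range n, f i) := by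
    intro n
    apply ENNReal.ofReal_le_ofReal
    rw [div_eq_mul_inv, div_eq_mul_inv]
    refine mul_le_mul_of_nonneg_right ?_
      (inv_nonneg.2 (Finset.sum_nonneg fun i _ => hpos i))
    classical
    rw [Finset.sum_indicator_eq_sum_filter]
    refine Finset.sum_le_sum_of_subset_of_nonneg ?_ (fun i _ _ => hpos i)
    intro i hi
    exact hF.mem_toFinset.2 (Finset.mem_filter.1 hi).2
  have h0' : Tendsto (fun n => ENNReal.ofReal (C / ∑ i ∈ Finset.range n, f i)) atTop (𝓝 0) := by
    have : Tendsto (fun n => C / ∑ i ∈ Finset.range n, f i) atTop (𝓝 0) :=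
      Tendsto.div_atTop tendsto_const_nhds hS
    simpa using ENNReal.tendsto_ofReal this
  refine le_antisymm ?_ zero_le
  calc phiBarF f F ≤ limsup (fun n => ENNReal.ofReal (C / ∑ i ∈ Finset.range n, f i)) atTop :=
        limsup_le_limsup (Eventually.of_forall hb)
    _ = 0 := h0'.limsup_eq

lemma phiBar_not_lsc (hpos : ∀ n, 0 ≤ f n) (h0 : f 0 ≠ 0) (hdiv : ¬ Summable f) :
    ¬ IsLSC (phiBarF f) := by
  intro h
  have h1 : phiBarF f Set.univ = 0 := by
    rw [h Set.univ]
    exact le_antisymm (iSup₂_le fun F hF => (phiBar_finite hpos hdiv hF.2).le) zero_le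
  rw [phiBar_univ hpos h0] at h1
  exact one_ne_zero h1

end Helpers

/-- For `f : ω → [0,∞)` with `f 0 ≠ 0`, `∑ f = ∞` and `f n / ∑_{i<n} f i → 0`:
`φ_f` is a σ-nonpathological lsc submeasure, and `φ̄_f` is a nonpathological submeasure
which is not lsc. -/
theorem stmt8 (f : ℕ → ℝ) (hpos : ∀ n, 0 ≤ f n) (h0 : f 0 ≠ 0) (hdiv : ¬ Summable f)
    (hlim : Tendsto (fun n => f n / ∑ i ∈ Finset.range n, f i) atTop (nhds 0)) :
    IsSubmeasure (phiF f) ∧ IsLSC (phiF f) ∧ (∀ A, hatSigma (phiF f) A = phiF f A) ∧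
    IsSubmeasure (phiBarF f) ∧ (∀ A, hat (phiBarF f) A = phiBarF f A) ∧
    ¬ IsLSC (phiBarF f) := by
  exact ⟨phiF_submeasure hpos, phiF_lsc hpos, phiF_sigmanonpath hpos,
    phiBar_submeasure hpos, phiBar_nonpath hpos, phiBar_not_lsc hpos h0 hdiv⟩
end

section
/- For every submeasure φ on a set X, 1 ≤ P_Fin(φ) ≤ P(φ) ≤ P_σ(φ) ≤ ∞. Moreover, if φ is a lower semicontinuous submeasure on ω, then P_Fin(φ) = P(φ) = P_σ(φ), and φ is nonpathological if and only if P_Fin(φ) = 1. -/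
open Filter
open scoped ENNReal

section Aux
variable {X : Type*}

lemma fa_mono {μ : Set X → ℝ≥0∞} (hμ : IsFAMeasure μ) {A B : Set X} (h : A ⊆ B) :
    μ A ≤ μ B := by
  have h2 := hμ.2 A (B \ A) disjoint_sdiff_self_right
  rw [Set.union_diff_cancel h] at h2
  rw [h2]; exact le_self_add

lemma hat_mono (φ : Set X → ℝ≥0∞) {A B : Set X} (h : A ⊆ B) : hat φ A ≤ hat φ B :=
  iSup₂_le fun μ hμ => le_trans (fa_mono hμ.1 h)
    (le_iSup₂ (f := fun (μ : Set X → ℝ≥0∞) (_ : IsFAMeasure μ ∧ ∀ B, μ B ≤ φ B) => μ B) μ hμ)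

lemma hatSigma_mono (φ : Set X → ℝ≥0∞) {A B : Set X} (h : A ⊆ B) :
    hatSigma φ A ≤ hatSigma φ B :=
  iSup₂_le fun μ hμ => le_trans (fa_mono hμ.1.1 h)
    (le_iSup₂ (f := fun (μ : Set X → ℝ≥0∞) (_ : IsSigmaMeasure μ ∧ ∀ B, μ B ≤ φ B) => μ B) μ hμ)

lemma hat_le_self (φ : Set X → ℝ≥0∞) (A : Set X) : hat φ A ≤ φ A :=
  iSup₂_le fun _ hμ => hμ.2 A

lemma hatSigma_le_hat (φ : Set X → ℝ≥0∞) (A : Set X) : hatSigma φ A ≤ hat φ A :=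
  iSup₂_le fun μ hμ =>
    le_iSup₂ (f := fun (μ : Set X → ℝ≥0∞) (_ : IsFAMeasure μ ∧ ∀ B, μ B ≤ φ B) => μ A)
      μ ⟨hμ.1.1, hμ.2⟩

lemma hat_empty (φ : Set X → ℝ≥0∞) : hat φ ∅ = 0 :=
  le_antisymm (iSup₂_le fun _ hμ => hμ.1.1.le) zero_le

lemma pratio_anti (a : ℝ≥0∞) {b b' : ℝ≥0∞} (h : b' ≤ b) : pratio a b ≤ pratio a b' := by
  unfold pratio
  split_ifs with h1 h2 h2
  · exact le_rfl
  · rcases h1 with ⟨ha, hb⟩ | ⟨ha, hb⟩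
    · exact absurd (Or.inl ⟨ha, le_antisymm (hb ▸ h) zero_le⟩) h2
    · subst ha
      have hb' : b' ≠ ⊤ := fun hh => h2 (Or.inr ⟨rfl, hh⟩)
      rw [ENNReal.top_div_of_ne_top hb']
      exact le_top
  · rcases h2 with ⟨ha, hb'⟩ | ⟨ha, hb'⟩
    · subst ha; simp
    · exact absurd (Or.inr ⟨ha, top_le_iff.mp (hb' ▸ h)⟩) h1
  · exact ENNReal.div_le_div_left h a

lemma div_le_pratio {a b c : ℝ≥0∞} (h : c ≤ b) : a / b ≤ pratio a c := by
  have h1 : a / c ≤ pratio a c := by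
    unfold pratio
    split_ifs with hc
    · rcases hc with ⟨ha, hc⟩ | ⟨ha, hc⟩ <;> subst ha <;> subst hc <;> simp
    · exact le_rfl
  exact le_trans (ENNReal.div_le_div_left h a) h1

lemma one_le_degPFin {φ : Set X → ℝ≥0∞} (hφ : IsSubmeasure φ) : 1 ≤ degPFin φ := by
  have : pratio (φ ∅) (hat φ ∅) = 1 := by
    rw [hφ.1, hat_empty]; simp [pratio]
  calc (1 : ℝ≥0∞) = pratio (φ ∅) (hat φ ∅) := this.symm
    _ ≤ degPFin φ :=
      le_iSup₂ (f := fun (A : Set X) (_ : A.Finite) => pratio (φ A) (hat φ A)) ∅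
        Set.finite_empty

lemma pratio_le_degPFin {φ : Set X → ℝ≥0∞} {F : Set X} (hF : F.Finite) :
    pratio (φ F) (hat φ F) ≤ degPFin φ :=
  le_iSup₂ (f := fun (A : Set X) (_ : A.Finite) => pratio (φ A) (hat φ A)) F hF

/-- finite additivity over a Finset -/
lemma fa_sum {μ : Set X → ℝ≥0∞} (hμ : IsFAMeasure μ) (s : Finset ℕ) (B : ℕ → Set X)
    (hd : Pairwise fun m n => Disjoint (B m) (B n)) :
    μ (⋃ n ∈ s, B n) = ∑ n ∈ s, μ (B n) := by
  induction s using Finset.induction_on with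
  | empty => simpa using hμ.1
  | @insert a s ha ih =>
    rw [Finset.set_biUnion_insert, Finset.sum_insert ha, ← ih]
    refine hμ.2 _ _ ?_
    rw [Set.disjoint_iUnion₂_right]
    exact fun n hn => hd (fun hh => ha (hh ▸ hn))

/-- For finite F, hat ≤ hatSigma. -/
lemma hat_le_hatSigma_of_finite {ψ : Set ℕ → ℝ≥0∞} (hψ : IsSubmeasure ψ) {F : Set ℕ}
    (hF : F.Finite) : hat ψ F ≤ hatSigma ψ F := by
  refine iSup₂_le fun μ hμ => ?_
  classical
  set ν : Set ℕ → ℝ≥0∞ := fun B => μ (B ∩ F) with hν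
  have hν0 : ν ∅ = 0 := by simp [hν, hμ.1.1]
  have hνfa : IsFAMeasure ν := by
    refine ⟨hν0, fun A B hAB => ?_⟩
    have : (A ∪ B) ∩ F = (A ∩ F) ∪ (B ∩ F) := Set.union_inter_distrib_right A B F
    rw [hν]; simp only
    rw [this]
    exact hμ.1.2 _ _ (hAB.mono Set.inter_subset_left Set.inter_subset_left)
  have hνσ : IsSigmaMeasure ν := by
    refine ⟨hνfa, fun A hA => ?_⟩
    set N : Set ℕ := {n | (A n ∩ F).Nonempty} with hN
    have hNfin : N.Finite := by
      set c : ℕ → ℕ := fun n => if h : (A n ∩ F).Nonempty then h.choose else 0 with hc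
      have hcmem : ∀ n ∈ N, c n ∈ A n ∩ F := by
        intro n hn
        have hn' : (A n ∩ F).Nonempty := hn
        simp only [hc]
        rw [dif_pos hn']
        exact hn'.choose_spec
      have hinj : Set.InjOn c N := by
        intro m hm n hn hmn
        by_contra hne
        exact (hA hne).ne_of_mem (hcmem m hm).1 ((hmn ▸ (hcmem n hn).1)) rfl
      have himg : c '' N ⊆ F := by
        rintro _ ⟨n, hn, rfl⟩; exact (hcmem n hn).2
      exact Set.Finite.of_finite_image (hF.subset himg) hinj
    set s := hNfin.toFinset with hs
    have hzero : ∀ n ∉ s, ν (A n) = 0 := by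
      intro n hn
      have : A n ∩ F = ∅ := by
        rw [← Set.not_nonempty_iff_eq_empty]
        intro hne
        exact hn (hNfin.mem_toFinset.mpr hne)
      simp [hν, this, hμ.1.1]
    have hU : (⋃ n, A n) ∩ F = ⋃ n ∈ s, (A n ∩ F) := by
      rw [Set.iUnion_inter]
      apply Set.Subset.antisymm
      · rintro x hx
        rcases Set.mem_iUnion.mp hx with ⟨n, hn⟩
        have hns : n ∈ s := hNfin.mem_toFinset.mpr ⟨x, hn⟩
        exact Set.mem_biUnion hns hn
      · exact Set.iUnion₂_subset fun n _ => Set.subset_iUnion (fun i => A i ∩ F) n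
    have hdisj : Pairwise fun m n => Disjoint (A m ∩ F) (A n ∩ F) :=
      fun m n hmn => (hA hmn).mono Set.inter_subset_left Set.inter_subset_left
    rw [hν]; simp only
    rw [hU, fa_sum hμ.1 s _ hdisj, tsum_eq_sum hzero]
  have hνle : ∀ B, ν B ≤ ψ B := fun B =>
    le_trans (hμ.2 _) (hψ.2.1 _ _ Set.inter_subset_left)
  have : μ F = ν F := by simp [hν]
  rw [this]
  exact le_iSup₂ (f := fun (μ : Set ℕ → ℝ≥0∞) (_ : IsSigmaMeasure μ ∧ ∀ B, μ B ≤ ψ B) => μ F)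
    ν ⟨hνσ, hνle⟩

/-- key approximation lemma -/
lemma key {ψ : Set ℕ → ℝ≥0∞} (hψ : IsSubmeasure ψ) (hlsc : IsLSC ψ)
    {g : Set ℕ → ℝ≥0∞} (hg : ∀ F A : Set ℕ, F ⊆ A → F.Finite → hat ψ F ≤ g A)
    (A : Set ℕ) : pratio (ψ A) (g A) ≤ degPFin ψ := by
  unfold pratio
  split_ifs with h1
  · exact one_le_degPFin hψ
  · rw [hlsc A, ENNReal.iSup_div]
    refine iSup_le fun F => ?_
    rw [ENNReal.iSup_div]
    refine iSup_le fun hFA => ?_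
    calc ψ F / g A ≤ pratio (ψ F) (hat ψ F) := div_le_pratio (hg F A hFA.1 hFA.2)
      _ ≤ degPFin ψ := pratio_le_degPFin hFA.2

lemma degPFin_le_degP (χ : Set X → ℝ≥0∞) : degPFin χ ≤ degP χ :=
  iSup₂_le fun A _ => le_iSup (fun A => pratio (χ A) (hat χ A)) A

lemma degP_le_degPSigma (χ : Set X → ℝ≥0∞) : degP χ ≤ degPSigma χ :=
  iSup_le fun A => le_trans (pratio_anti _ (hatSigma_le_hat χ A))
    (le_iSup (fun A => pratio (χ A) (hatSigma χ A)) A)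

end Aux

/-- For every submeasure `φ` on `X`: `1 ≤ P_Fin φ ≤ P φ ≤ P_σ φ ≤ ∞`. Moreover, for every
lsc submeasure `ψ` on `ω`: `P_Fin ψ = P ψ = P_σ ψ` and `ψ` is nonpathological iff
`P_Fin ψ = 1`. -/
theorem stmt11 {X : Type*} (φ : Set X → ℝ≥0∞) (hφ : IsSubmeasure φ) :
    (1 ≤ degPFin φ ∧ degPFin φ ≤ degP φ ∧ degP φ ≤ degPSigma φ ∧ degPSigma φ ≤ ⊤) ∧
    ∀ ψ : Set ℕ → ℝ≥0∞, IsSubmeasure ψ → IsLSC ψ →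
      degPFin ψ = degP ψ ∧ degP ψ = degPSigma ψ ∧
      ((∀ A, hat ψ A = ψ A) ↔ degPFin ψ = 1) := by
  refine ⟨⟨one_le_degPFin hφ, degPFin_le_degP φ, degP_le_degPSigma φ, le_top⟩, ?_⟩
  intro ψ hψ hlsc
  have hPleFin : degP ψ ≤ degPFin ψ := by
    refine iSup_le fun A => key hψ hlsc (fun F A hFA hF => le_trans ?_ (hat_mono ψ hFA)) A
    exact le_rfl
  have hSleFin : degPSigma ψ ≤ degPFin ψ := by
    refine iSup_le fun A => key hψ hlsc (fun F A hFA hF => ?_) A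
    exact le_trans (hat_le_hatSigma_of_finite hψ hF) (hatSigma_mono ψ hFA)
  have e1 : degPFin ψ = degP ψ := le_antisymm (degPFin_le_degP ψ) hPleFin
  have e2 : degP ψ = degPSigma ψ :=
    le_antisymm (degP_le_degPSigma ψ) (le_trans hSleFin (degPFin_le_degP ψ))
  refine ⟨e1, e2, ?_, ?_⟩
  · intro hnp
    refine le_antisymm (iSup₂_le fun A hA => ?_) (one_le_degPFin hψ)
    rw [hnp A]
    unfold pratio
    split_ifs with h1
    · exact le_rfl
    · push_neg at h1
      rcases eq_or_ne (ψ A) 0 with h0 | h0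
      · simp [h0]
      rcases eq_or_ne (ψ A) ⊤ with ht | ht
      · exact absurd ht (by simpa [ht] using h1.2 ht)
      · rw [ENNReal.div_self h0 ht]
  · intro hdeg A
    refine le_antisymm (hat_le_self ψ A) ?_
    have hfin : ∀ F : Set ℕ, F.Finite → ψ F ≤ hat ψ F := by
      intro F hF
      have h1 : pratio (ψ F) (hat ψ F) ≤ 1 := hdeg ▸ pratio_le_degPFin hF
      by_cases hc : (ψ F = 0 ∧ hat ψ F = 0) ∨ (ψ F = ⊤ ∧ hat ψ F = ⊤)
      · rcases hc with ⟨h0, _⟩ | ⟨_, ht⟩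
        · simp [h0]
        · simp [ht]
      · rw [pratio, if_neg hc] at h1
        rcases eq_or_ne (hat ψ F) ⊤ with ht | ht
        · simp [ht]
        rcases eq_or_ne (hat ψ F) 0 with h0 | h0
        · rw [h0] at h1
          rcases eq_or_ne (ψ F) 0 with hh | hh
          · simp [hh]
          · rw [ENNReal.div_zero hh] at h1
            exact absurd h1 (by simp)
        · calc ψ F ≤ 1 * hat ψ F := (ENNReal.div_le_iff h0 ht).mp h1
            _ = hat ψ F := one_mul _
    rw [hlsc A]
    refine iSup₂_le fun F hF => le_trans (hfin F hF.2) (hat_mono ψ hF.1)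
end
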